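/- For a profile x supported in equilibrium by a balanced rule f (meaning each agent i's investment x_i maximizes her expected payoff U_i), the aggregate identity 𝕍(x) = f(0,0) + Σ_{j≥1} (∏_{i<j} p(x_i)) f(j,j) + 𝔾(x) holds; in particular, since f(0,0)=1 and f(j,j) ≥ 0, every equilibrium profile satisfies 𝕍(x) − 1 ≥ 𝔾(x). -/

import Mathlib

/-- Aggregate equilibrium identity: if the balanced rule f supports profile x
(first-order conditions R_i − f(i,i) = g(x_i)/p(x_i) hold for all i), then
𝕍(x) = f(0,0) + Σ_{j≥1}(∏_{i<j}p(x_i)) f(j,j) + 𝔾(x), and hence 𝕍(x) − 1 ≥ 𝔾(x). -/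
theorem stmt7 (ε : ℝ) (hε : 0 < ε) (p g : ℝ → ℝ)
    (f : ℕ → ℕ → ℝ) (hfnn : ∀ i k, 0 ≤ f i k)
    (hbal : ∀ k : ℕ, ∑ i ∈ Finset.range (k + 1), f i k = (k : ℝ) + 1)
    (x : ℕ → ℝ) (hx : ∀ i, 0 ≤ x i)
    (hpx : ∀ i, 0 < p (x i) ∧ p (x i) ≤ 1 - ε)
    (hV : Summable (fun j : ℕ => ∏ i ∈ Finset.range j, p (x i)))
    (hG : Summable (fun j : ℕ => (∏ i ∈ Finset.range j, p (x i)) * g (x j)))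
    (hF : Summable (fun j : ℕ => (∏ i ∈ Finset.range j, p (x i)) * f j j))
    (hFOC : ∀ i : ℕ,
      (∑' m : ℕ, (∏ j ∈ Finset.Ico (i + 1) (i + 1 + m), p (x j)) *
          (1 - p (x (i + 1 + m))) * f i (i + 1 + m)) - f i i
        = g (x i) / p (x i)) :
    (∑' j : ℕ, ∏ i ∈ Finset.range j, p (x i)) =
      (∑' j : ℕ, (∏ i ∈ Finset.range j, p (x i)) * f j j) +
      (∑' j : ℕ, (∏ i ∈ Finset.range j, p (x i)) * g (x j)) ∧
    (∑' j : ℕ, ∏ i ∈ Finset.range j, p (x i)) - 1 ≥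
      ∑' j : ℕ, (∏ i ∈ Finset.range j, p (x i)) * g (x j) := by
  set P : ℕ → ℝ := fun j => ∏ i ∈ Finset.range j, p (x i) with hPdef
  set r : ℝ := 1 - ε with hrdef
  have hp : ∀ i, 0 < p (x i) := fun i => (hpx i).1
  have hpr : ∀ i, p (x i) ≤ r := fun i => (hpx i).2
  have hr0 : 0 ≤ r := le_trans (hp 0).le (hpr 0)
  have hr1 : r < 1 := by simp [hrdef]; linarith
  have hP0 : ∀ j, 0 < P j := fun j => Finset.prod_pos (fun i _ => hp i)
  have hPsucc : ∀ j, P (j + 1) = P j * p (x j) := fun j => Finset.prod_range_succ _ _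
  have hPle : ∀ j, P j ≤ r ^ j := by
    intro j
    calc P j ≤ ∏ i ∈ Finset.range j, r :=
          Finset.prod_le_prod (fun i _ => (hp i).le) (fun i _ => hpr i)
      _ = r ^ j := by rw [Finset.prod_const, Finset.card_range]
  have hq0 : ∀ k, 0 ≤ 1 - p (x k) := fun k => by have := hpr k; simp [hrdef] at this; linarith
  have hq1 : ∀ k, 1 - p (x k) ≤ 1 := fun k => by have := hp k; linarith
  have hfle : ∀ i k, i ≤ k → f i k ≤ (k : ℝ) + 1 := by
    intro i k hik
    rw [← hbal k]
    exact Finset.single_le_sum (fun j _ => hfnn j k) (Finset.mem_range.2 (by omega))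
  -- the double family
  set b : ℕ × ℕ → ℝ := fun q =>
    P (q.1 + 1 + q.2) * (1 - p (x (q.1 + 1 + q.2))) * f q.1 (q.1 + 1 + q.2) with hbdef
  have hbnn : ∀ q, 0 ≤ b q := fun q =>
    mul_nonneg (mul_nonneg (hP0 _).le (hq0 _)) (hfnn _ _)
  have hble : ∀ i m : ℕ, b (i, m) ≤ r ^ (i + 1) * (((m : ℝ) + (i + 2)) * r ^ m) := by
    intro i m
    have e : r ^ (i + 1) * (((m : ℝ) + (i + 2)) * r ^ m)
        = r ^ (i + 1 + m) * 1 * (((i + 1 + m : ℕ) : ℝ) + 1) := by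
      push_cast; rw [pow_add]; ring
    rw [e, hbdef]
    dsimp only
    apply mul_le_mul _ (hfle i (i + 1 + m) (by omega)) (hfnn _ _) (by positivity)
    exact mul_le_mul (hPle (i + 1 + m)) (hq1 (i + 1 + m)) (hq0 (i + 1 + m))
      (pow_nonneg hr0 _)
  have haux : ∀ C : ℝ, Summable (fun m : ℕ => ((m : ℝ) + C) * r ^ m) := by
    intro C
    have h1 : Summable (fun m : ℕ => (m : ℝ) * r ^ m) := by
      simpa using summable_pow_mul_geometric_of_norm_lt_one 1
        (r := r) (by rwa [Real.norm_eq_abs, abs_of_nonneg hr0])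
    have h2 : Summable (fun m : ℕ => C * r ^ m) :=
      (summable_geometric_of_lt_one hr0 hr1).mul_left C
    simpa [add_mul] using h1.add h2
  have hbslice : ∀ i : ℕ, Summable (fun m => b (i, m)) := by
    intro i
    exact Summable.of_nonneg_of_le (fun m => hbnn _) (fun m => hble i m)
      ((haux ((i : ℝ) + 2)).mul_left (r ^ (i + 1)))
  -- value of each slice
  have hkey : ∀ i : ℕ, ∑' m, b (i, m) = P i * g (x i) + P i * p (x i) * f i i := by
    intro i
    have hbi : ∀ m : ℕ, b (i, m) = P (i + 1) *
        ((∏ j ∈ Finset.Ico (i + 1) (i + 1 + m), p (x j)) *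
          (1 - p (x (i + 1 + m))) * f i (i + 1 + m)) := by
      intro m
      have : P (i + 1) * ∏ j ∈ Finset.Ico (i + 1) (i + 1 + m), p (x j) = P (i + 1 + m) :=
        Finset.prod_range_mul_prod_Ico _ (by omega)
      rw [hbdef]
      dsimp only
      rw [← this]
      ring
    calc ∑' m, b (i, m)
        = P (i + 1) * ∑' m : ℕ, (∏ j ∈ Finset.Ico (i + 1) (i + 1 + m), p (x j)) *
            (1 - p (x (i + 1 + m))) * f i (i + 1 + m) := by
          rw [← tsum_mul_left]; exact tsum_congr hbi
      _ = P (i + 1) * (g (x i) / p (x i) + f i i) := by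
          rw [← hFOC i]; ring
      _ = P i * g (x i) + P i * p (x i) * f i i := by
          have hpne : p (x i) ≠ 0 := (hp i).ne'
          have h2 : p (x i) * (g (x i) / p (x i)) = g (x i) := by field_simp
          calc P (i + 1) * (g (x i) / p (x i) + f i i)
              = P i * (p (x i) * (g (x i) / p (x i))) + P i * p (x i) * f i i := by
                rw [hPsucc i]; ring
            _ = P i * g (x i) + P i * p (x i) * f i i := by rw [h2]
  have hS2 : Summable (fun i : ℕ => P i * p (x i) * f i i) := by
    refine Summable.of_nonneg_of_le
      (fun i => mul_nonneg (mul_nonneg (hP0 i).le (hp i).le) (hfnn i i))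
      (fun i => ?_) hF
    have : p (x i) ≤ 1 := le_trans (hpr i) hr1.le
    calc P i * p (x i) * f i i ≤ P i * 1 * f i i := by
          apply mul_le_mul_of_nonneg_right _ (hfnn i i)
          exact mul_le_mul_of_nonneg_left this (hP0 i).le
      _ = P i * f i i := by ring
  have hrow : Summable (fun i : ℕ => ∑' m, b (i, m)) := by
    rw [summable_congr hkey]
    exact hG.add hS2
  have hbsum : Summable b :=
    (summable_prod_of_nonneg hbnn).2 ⟨hbslice, hrow⟩
  have hSval : ∑' q : ℕ × ℕ, b q =
      (∑' i : ℕ, P i * g (x i)) + ∑' i : ℕ, P i * p (x i) * f i i := by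
    rw [Summable.tsum_prod' hbsum hbslice, tsum_congr hkey, Summable.tsum_add hG hS2]
  -- the reindexed family
  set c : ℕ × ℕ → ℝ := fun q =>
    if q.2 < q.1 then P q.1 * (1 - p (x q.1)) * f q.2 q.1 else 0 with hcdef
  set j0 : ℕ × ℕ → ℕ × ℕ := fun q => (q.1 + 1 + q.2, q.1) with hj0def
  have hj0inj : Function.Injective j0 := by
    rintro ⟨a, m⟩ ⟨a', m'⟩ h
    have h1 : a + 1 + m = a' + 1 + m' := congrArg Prod.fst h
    have h2 : a = a' := congrArg Prod.snd h
    simp only [Prod.mk.injEq]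
    omega
  have hcj : ∀ q : ℕ × ℕ, c (j0 q) = b q := by
    rintro ⟨i, m⟩
    simp only [hcdef, hj0def, hbdef]
    rw [if_pos (by omega)]
  have hcsupp : Function.support c ⊆ Set.range j0 := by
    rintro ⟨k, i⟩ hki
    have hik : i < k := by
      by_contra h
      exact hki (by simp [hcdef, if_neg h])
    refine ⟨(i, k - i - 1), ?_⟩
    have he : i + 1 + (k - i - 1) = k := by omega
    show (i + 1 + (k - i - 1), i) = (k, i)
    rw [he]
  have hcsum : Summable c := by
    rw [← Function.Injective.summable_iff hj0inj
      (fun y hy => Function.notMem_support.1 (fun hs => hy (hcsupp hs)))]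
    exact (summable_congr hcj).2 hbsum
  have hceq : ∑' q : ℕ × ℕ, c q = ∑' q : ℕ × ℕ, b q := by
    rw [← Function.Injective.tsum_eq hj0inj hcsupp]
    exact tsum_congr hcj
  have hcslice : ∀ k : ℕ, ∑' i : ℕ, c (k, i) =
      P k * (1 - p (x k)) * (((k : ℝ) + 1) - f k k) := by
    intro k
    have h1 : ∑' i : ℕ, c (k, i) = ∑ i ∈ Finset.range k, c (k, i) :=
      tsum_eq_sum (fun i hi => by
        simp only [hcdef]
        exact if_neg (fun h => hi (Finset.mem_range.2 h)))
    rw [h1]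
    have h2 : ∀ i ∈ Finset.range k, c (k, i) = P k * (1 - p (x k)) * f i k := by
      intro i hi
      simp only [hcdef]
      exact if_pos (Finset.mem_range.1 hi)
    rw [Finset.sum_congr rfl h2, ← Finset.mul_sum]
    have h3 : ∑ i ∈ Finset.range k, f i k = ((k : ℝ) + 1) - f k k := by
      have := hbal k
      rw [Finset.sum_range_succ] at this
      linarith
    rw [h3]
  have hcslicesummable : ∀ k : ℕ, Summable (fun i => c (k, i)) := by
    intro k
    apply summable_of_ne_finset_zero (s := Finset.range k)
    intro i hi
    simp only [hcdef]
    exact if_neg (fun h => hi (Finset.mem_range.2 h))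
  have hcval : ∑' q : ℕ × ℕ, c q =
      ∑' k : ℕ, P k * (1 - p (x k)) * (((k : ℝ) + 1) - f k k) := by
    rw [Summable.tsum_prod' hcsum hcslicesummable]
    exact tsum_congr hcslice
  -- telescoping: HasSum u V
  have hNPN : Filter.Tendsto (fun N : ℕ => (N : ℝ) * P N) Filter.atTop (nhds 0) := by
    have h1 : Filter.Tendsto (fun N : ℕ => (N : ℝ) * r ^ N) Filter.atTop (nhds 0) := by
      have := (summable_pow_mul_geometric_of_norm_lt_one 1
        (r := r) (by rwa [Real.norm_eq_abs, abs_of_nonneg hr0])).tendsto_atTop_zero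
      simpa using this
    apply squeeze_zero (fun N => mul_nonneg (Nat.cast_nonneg N) (hP0 N).le)
      (fun N => mul_le_mul_of_nonneg_left (hPle N) (Nat.cast_nonneg N)) h1
  have hpartial : ∀ N : ℕ, ∑ k ∈ Finset.range N, P k * (1 - p (x k)) * ((k : ℝ) + 1)
      = (∑ k ∈ Finset.range N, P k) - (N : ℝ) * P N := by
    intro N
    induction N with
    | zero => simp
    | succ N ih =>
      rw [Finset.sum_range_succ, Finset.sum_range_succ (f := P), ih, hPsucc N]
      push_cast
      ring
  have huV : HasSum (fun k : ℕ => P k * (1 - p (x k)) * ((k : ℝ) + 1)) (∑' j, P j) := by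
    rw [hasSum_iff_tendsto_nat_of_nonneg
      (fun k => mul_nonneg (mul_nonneg (hP0 k).le (hq0 k)) (by positivity))]
    have h2 : Filter.Tendsto (fun N : ℕ => ∑ k ∈ Finset.range N, P k)
        Filter.atTop (nhds (∑' j, P j)) := hV.hasSum.tendsto_sum_nat
    have := h2.sub hNPN
    rw [sub_zero] at this
    exact this.congr (fun N => (hpartial N).symm)
  have hvsum : Summable (fun k : ℕ => P k * (1 - p (x k)) * f k k) := by
    refine Summable.of_nonneg_of_le
      (fun k => mul_nonneg (mul_nonneg (hP0 k).le (hq0 k)) (hfnn k k))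
      (fun k => ?_) hF
    calc P k * (1 - p (x k)) * f k k ≤ P k * 1 * f k k :=
          mul_le_mul_of_nonneg_right
            (mul_le_mul_of_nonneg_left (hq1 k) (hP0 k).le) (hfnn k k)
      _ = P k * f k k := by ring
  have hsplit : ∑' k : ℕ, P k * (1 - p (x k)) * (((k : ℝ) + 1) - f k k)
      = (∑' j, P j) - ∑' k : ℕ, P k * (1 - p (x k)) * f k k := by
    rw [← huV.tsum_eq]
    rw [← Summable.tsum_sub huV.summable hvsum]
    exact tsum_congr (fun k => by ring)
  -- splitting F
  have hFsplit : ∑' j : ℕ, P j * f j j =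
      (∑' k : ℕ, P k * (1 - p (x k)) * f k k) + ∑' i : ℕ, P i * p (x i) * f i i := by
    rw [← Summable.tsum_add hvsum hS2]
    exact tsum_congr (fun k => by ring)
  -- assemble
  have hmain : (∑' j, P j) = (∑' j : ℕ, P j * f j j) + ∑' j : ℕ, P j * g (x j) := by
    have e1 := hSval
    rw [← hceq, hcval, hsplit] at e1
    rw [hFsplit]
    linarith
  refine ⟨hmain, ?_⟩
  have hf00 : f 0 0 = 1 := by have := hbal 0; simpa using this
  have hFge : (1 : ℝ) ≤ ∑' j : ℕ, P j * f j j := by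
    have := Summable.le_tsum hF 0 (fun j _ => mul_nonneg (hP0 j).le (hfnn j j))
    simpa [hPdef, hf00] using this
  linarith
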